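/- Let C_0 ⊆ GF(q^m)^r be a linear code, and for s ≥ 0 let C_s = C_0 × GF(q^m)^s ⊆ GF(q^m)^{r+s}. If B_{0,i} denotes the number of codewords of rank weight i in C_0, then the number B_{s,u} of codewords of rank weight u in C_s is B_{s,u} = Σ_{i=0}^u q^{is} B_{0,i} [s choose u-i]_q α(m-i, u-i). -/
import Mathlib

noncomputable section

/-- `alphaQ q a u = ∏_{i=0}^{u-1} (q^a - q^i)`, with integer exponent `a`. -/
def alphaQ (q : ℚ) (a : ℤ) (u : ℕ) : ℚ :=
  ∏ i ∈ Finset.range u, (q ^ a - q ^ (i : ℤ))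

/-- The Gaussian binomial `[a choose b]_q = α(a,b)/α(b,b)`. -/
def gaussQ (q : ℚ) (a b : ℕ) : ℚ := alphaQ q a b / alphaQ q b b

/-- `sig l = l(l-1)/2`. -/
def sig (l : ℕ) : ℕ := l * (l - 1) / 2

/-- The rank weight of a vector with coordinates in `Fqm`: the dimension over the base
field `Fq` of the `Fq`-linear span of its coordinates. -/
def rankWeight (Fq : Type*) [Field Fq] {Fqm : Type*} [Field Fqm] [Algebra Fq Fqm]
    {n : ℕ} (x : Fin n → Fqm) : ℕ :=
  Module.finrank Fq (Submodule.span Fq (Set.range x))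

open Finset Module

namespace CPRD

/-! ### Algebraic lemmas about `alphaQ` and `gaussQ` -/

lemma alphaQ_zero (q : ℚ) (a : ℤ) : alphaQ q a 0 = 1 := by simp [alphaQ]

lemma alphaQ_succ (q : ℚ) (a : ℤ) (k : ℕ) :
    alphaQ q a (k + 1) = alphaQ q a k * (q ^ a - q ^ (k : ℤ)) := by
  simp [alphaQ, Finset.prod_range_succ]

lemma alphaQ_pos {q : ℚ} (hq : 1 < q) {a b : ℕ} (hba : b ≤ a) :
    0 < alphaQ q (a : ℤ) b := by
  apply Finset.prod_pos
  intro i hi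
  rw [Finset.mem_range] at hi
  have : (q : ℚ) ^ (i : ℤ) < q ^ (a : ℤ) := by
    rw [zpow_natCast, zpow_natCast]
    exact pow_lt_pow_right₀ hq (lt_of_lt_of_le hi hba)
  linarith

lemma alphaQ_ne_zero {q : ℚ} (hq : 1 < q) (b : ℕ) : alphaQ q (b : ℤ) b ≠ 0 :=
  ne_of_gt (alphaQ_pos hq le_rfl)

lemma gaussQ_zero (q : ℚ) (a : ℕ) : gaussQ q a 0 = 1 := by
  simp [gaussQ, alphaQ_zero]

lemma gaussQ_zero_left (q : ℚ) (b : ℕ) (hb : b ≠ 0) :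
    gaussQ q 0 b = 0 := by
  have h : alphaQ q ((0 : ℕ) : ℤ) b = 0 := by
    apply Finset.prod_eq_zero (Finset.mem_range.2 (Nat.pos_of_ne_zero hb))
    simp
  rw [Nat.cast_zero] at h
  simp [gaussQ, h]

/-- `alphaQ q (s+1) (k+1) = (q^(s+1) - 1) * q^k * alphaQ q s k`. -/
lemma alphaQ_succ_succ (q : ℚ) (hq0 : q ≠ 0) (s k : ℕ) :
    alphaQ q ((s + 1 : ℕ) : ℤ) (k + 1) = (q ^ (s + 1) - 1) * q ^ k * alphaQ q (s : ℤ) k := by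
  unfold alphaQ
  rw [Finset.prod_range_succ']
  have h1 : ∀ i ∈ Finset.range k, q ^ (((s + 1 : ℕ) : ℤ)) - q ^ (((i + 1 : ℕ)) : ℤ)
      = q * (q ^ (s : ℤ) - q ^ (i : ℤ)) := by
    intro i _
    push_cast
    rw [zpow_add₀ hq0 (s : ℤ) 1, zpow_add₀ hq0 (i : ℤ) 1, zpow_one]
    ring
  rw [Finset.prod_congr rfl h1, Finset.prod_mul_distrib, Finset.prod_const]
  rw [show ((s + 1 : ℕ) : ℤ) = ((s : ℤ) + 1) by push_cast; ring,
    zpow_add₀ hq0 (s : ℤ) 1, zpow_one, zpow_natCast, Finset.card_range]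
  push_cast
  rw [zpow_zero]
  ring

/-- Pascal identity for `gaussQ`. -/
lemma gaussQ_pascal {q : ℚ} (hq : 1 < q) (s k : ℕ) :
    gaussQ q (s + 1) (k + 1) = q ^ (k + 1) * gaussQ q s (k + 1) + gaussQ q s k := by
  have hq0 : q ≠ 0 := by linarith
  have hA : alphaQ q (k : ℤ) k ≠ 0 := alphaQ_ne_zero hq k
  have hpow : (1 : ℚ) < q ^ (k + 1) := one_lt_pow₀ hq (Nat.succ_ne_zero k)
  have hden : (q : ℚ) ^ (k + 1) - 1 ≠ 0 := by linarith
  have hqk : (q : ℚ) ^ k ≠ 0 := pow_ne_zero _ hq0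
  unfold gaussQ
  rw [alphaQ_succ_succ q hq0 s k, alphaQ_succ_succ q hq0 k k, alphaQ_succ q (s : ℤ) k,
    zpow_natCast, zpow_natCast]
  field_simp
  ring



open scoped Classical

lemma range_snoc {n : ℕ} {α : Type*} (w : Fin n → α) (x : α) :
    Set.range (Fin.snoc w x : Fin (n + 1) → α) = insert x (Set.range w) := by
  ext y
  simp only [Set.mem_range, Set.mem_insert_iff]
  constructor
  · rintro ⟨i, rfl⟩
    induction i using Fin.lastCases with
    | last => left; simp
    | cast i => right; exact ⟨i, by simp⟩
  · rintro (rfl | ⟨i, rfl⟩)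
    · exact ⟨Fin.last n, by simp⟩
    · exact ⟨i.castSucc, by simp⟩

variable {Fq Fqm : Type*} [Field Fq] [Field Fqm] [Fintype Fq] [Fintype Fqm] [Algebra Fq Fqm]

lemma rankWeight_le {n : ℕ} (w : Fin n → Fqm) : rankWeight Fq w ≤ finrank Fq Fqm :=
  Submodule.finrank_le _

lemma rankWeight_snoc_of_mem {n : ℕ} (w : Fin n → Fqm) (x : Fqm)
    (h : x ∈ Submodule.span Fq (Set.range w)) :
    rankWeight Fq (Fin.snoc w x) = rankWeight Fq w := by
  unfold rankWeight
  rw [range_snoc, Submodule.span_insert_eq_span h]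

lemma rankWeight_snoc_of_notMem {n : ℕ} (w : Fin n → Fqm) (x : Fqm)
    (h : x ∉ Submodule.span Fq (Set.range w)) :
    rankWeight Fq (Fin.snoc w x) = rankWeight Fq w + 1 := by
  have hx0 : x ≠ 0 := by rintro rfl; exact h (Submodule.zero_mem _)
  unfold rankWeight
  rw [range_snoc, Submodule.span_insert]
  have hinf : (Submodule.span Fq {x}) ⊓ Submodule.span Fq (Set.range w) = ⊥ := by
    rw [Submodule.eq_bot_iff]
    intro y hy
    rw [Submodule.mem_inf] at hy
    obtain ⟨hy1, hy2⟩ := hy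
    obtain ⟨c, rfl⟩ := Submodule.mem_span_singleton.1 hy1
    rcases eq_or_ne c 0 with rfl | hc
    · simp
    · exfalso
      apply h
      have h2 := Submodule.smul_mem _ c⁻¹ hy2
      rwa [smul_smul, inv_mul_cancel₀ hc, one_smul] at h2
  have hsum := Submodule.finrank_sup_add_finrank_inf_eq (Submodule.span Fq {x})
    (Submodule.span Fq (Set.range w))
  rw [hinf, finrank_bot, finrank_span_singleton hx0] at hsum
  omega

lemma card_fiber {n : ℕ} (w : Fin n → Fqm) (u : ℕ) :
    Nat.card {x : Fqm // rankWeight Fq (Fin.snoc w x) = u} =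
      if rankWeight Fq w = u then Fintype.card Fq ^ rankWeight Fq w
      else if rankWeight Fq w + 1 = u then
        Fintype.card Fqm - Fintype.card Fq ^ rankWeight Fq w
      else 0 := by
  classical
  set W := Submodule.span Fq (Set.range w) with hW
  set t := rankWeight Fq w with htdef
  have key : ∀ x : Fqm, rankWeight Fq (Fin.snoc w x) = if x ∈ W then t else t + 1 := by
    intro x
    by_cases hx : x ∈ W
    · rw [if_pos hx, rankWeight_snoc_of_mem w x hx]
    · rw [if_neg hx, rankWeight_snoc_of_notMem w x hx]
  have cardW : Fintype.card {x : Fqm // x ∈ W} = Fintype.card Fq ^ t := by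
    have h1 : Fintype.card W = Fintype.card Fq ^ finrank Fq W := card_eq_pow_finrank
    have h2 : finrank Fq W = t := rfl
    rw [← h2]
    exact h1
  rcases eq_or_ne t u with rfl | htu
  · rw [if_pos rfl, Nat.card_eq_fintype_card, ← cardW]
    apply Fintype.card_congr
    apply Equiv.subtypeEquivRight
    intro x
    rw [key x]
    split_ifs with h
    · simp [h]
    · simp only [h, iff_false]
      omega
  · rw [if_neg htu]
    rcases eq_or_ne (t + 1) u with rfl | htu1
    · rw [if_pos rfl, Nat.card_eq_fintype_card]
      have : Fintype.card {x : Fqm // rankWeight Fq (Fin.snoc w x) = t + 1}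
          = Fintype.card {x : Fqm // ¬ x ∈ W} := by
        apply Fintype.card_congr
        apply Equiv.subtypeEquivRight
        intro x
        rw [key x]
        split_ifs with h
        · simp only [h, not_true, iff_false]
          omega
        · simp [h]
      rw [this, Fintype.card_subtype_compl, cardW]
    · rw [if_neg htu1]
      have hempty : ∀ x : Fqm, rankWeight Fq (Fin.snoc w x) ≠ u := by
        intro x
        rw [key x]
        split_ifs
        · exact htu
        · exact htu1
      haveI : IsEmpty {x : Fqm // rankWeight Fq (Fin.snoc w x) = u} :=
        ⟨fun ⟨x, hx⟩ => hempty x hx⟩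
      exact Nat.card_of_isEmpty


variable (Fq) in
def Nc {r : ℕ} (C₀ : Submodule Fqm (Fin r → Fqm)) (s u : ℕ) : ℕ :=
  Nat.card {w : Fin (r + s) → Fqm //
    (fun i : Fin r => w (Fin.castAdd s i)) ∈ C₀ ∧ rankWeight Fq w = u}

lemma Nc_eq_zero {r : ℕ} (C₀ : Submodule Fqm (Fin r → Fqm)) (s u : ℕ)
    (hu : finrank Fq Fqm < u) : Nc Fq C₀ s u = 0 := by
  haveI : IsEmpty {w : Fin (r + s) → Fqm //
      (fun i : Fin r => w (Fin.castAdd s i)) ∈ C₀ ∧ rankWeight Fq w = u} :=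
    ⟨fun ⟨w, _, hw⟩ => absurd (hw ▸ rankWeight_le w) (by omega)⟩
  exact Nat.card_of_isEmpty

lemma Nc_succ_sum {r : ℕ} (C₀ : Submodule Fqm (Fin r → Fqm)) (s u : ℕ) :
    Nc Fq C₀ (s + 1) u = ∑ a : Fin (r + s) → Fqm,
      if (fun i : Fin r => a (Fin.castAdd s i)) ∈ C₀ then
        (if rankWeight Fq a = u then Fintype.card Fq ^ rankWeight Fq a
         else if rankWeight Fq a + 1 = u then
           Fintype.card Fqm - Fintype.card Fq ^ rankWeight Fq a
         else 0)
      else 0 := by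
  classical
  set P : (Fin (r + s) → Fqm) → Prop := fun a => (fun i : Fin r => a (Fin.castAdd s i)) ∈ C₀
    with hP
  have e1 : {w : Fin (r + (s + 1)) → Fqm //
        (fun i : Fin r => w (Fin.castAdd (s + 1) i)) ∈ C₀ ∧ rankWeight Fq w = u} ≃
      {p : (Fin (r + s) → Fqm) × Fqm //
        P p.1 ∧ rankWeight Fq (Fin.snoc p.1 p.2) = u} := by
    refine ⟨fun w => ⟨(Fin.init w.1, w.1 (Fin.last (r + s))), ?_⟩,
      fun p => ⟨Fin.snoc p.1.1 p.1.2, ?_⟩, fun w => ?_, fun p => ?_⟩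
    · obtain ⟨w, hw1, hw2⟩ := w
      refine ⟨hw1, ?_⟩
      rw [Fin.snoc_init_self]
      exact hw2
    · obtain ⟨⟨a, x⟩, h1, h2⟩ := p
      refine ⟨?_, h2⟩
      have : (fun i : Fin r => (Fin.snoc a x : Fin (r + s + 1) → Fqm) (Fin.castAdd (s + 1) i))
          = fun i : Fin r => a (Fin.castAdd s i) := by
        funext i
        have : (Fin.castAdd (s + 1) i : Fin (r + s + 1)) = Fin.castSucc (Fin.castAdd s i) :=
          rfl
        rw [this, Fin.snoc_castSucc]
      rw [this]
      exact h1
    · apply Subtype.ext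
      exact Fin.snoc_init_self _
    · apply Subtype.ext
      apply Prod.ext <;> simp
  have e2 := Equiv.subtypeProdEquivSigmaSubtype
    (fun (a : Fin (r + s) → Fqm) (b : Fqm) => P a ∧ rankWeight Fq (Fin.snoc a b) = u)
  rw [Nc, Nat.card_congr (e1.trans e2), Nat.card_eq_fintype_card, Fintype.card_sigma]
  apply Finset.sum_congr rfl
  intro a _
  by_cases hPa : P a
  · rw [if_pos hPa]
    have : Fintype.card {b : Fqm // P a ∧ rankWeight Fq (Fin.snoc a b) = u}
        = Fintype.card {b : Fqm // rankWeight Fq (Fin.snoc a b) = u} :=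
      Fintype.card_congr (Equiv.subtypeEquivRight (by simp [hPa]))
    rw [this, ← Nat.card_eq_fintype_card, card_fiber]
  · rw [if_neg hPa]
    rw [Fintype.card_eq_zero_iff]
    exact ⟨fun ⟨b, hb, _⟩ => hPa hb⟩

lemma Nc_succ_zero {r : ℕ} (C₀ : Submodule Fqm (Fin r → Fqm)) (s : ℕ) :
    Nc Fq C₀ (s + 1) 0 = Nc Fq C₀ s 0 := by
  classical
  rw [Nc_succ_sum]
  have h : ∀ a : Fin (r + s) → Fqm,
      (if (fun i : Fin r => a (Fin.castAdd s i)) ∈ C₀ then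
        (if rankWeight Fq a = 0 then Fintype.card Fq ^ rankWeight Fq a
         else if rankWeight Fq a + 1 = 0 then
           Fintype.card Fqm - Fintype.card Fq ^ rankWeight Fq a
         else 0)
      else 0) =
      if (fun i : Fin r => a (Fin.castAdd s i)) ∈ C₀ ∧ rankWeight Fq a = 0 then 1 else 0 := by
    intro a
    by_cases hP : (fun i : Fin r => a (Fin.castAdd s i)) ∈ C₀ <;>
      by_cases hr : rankWeight Fq a = 0 <;>
      simp [hP, hr]
  rw [Finset.sum_congr rfl (fun a _ => h a), ← Finset.card_filter,
    ← Fintype.card_subtype, Nc, Nat.card_eq_fintype_card]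

lemma Nc_succ_pos {r : ℕ} (C₀ : Submodule Fqm (Fin r → Fqm)) (s v : ℕ) :
    Nc Fq C₀ (s + 1) (v + 1) = Fintype.card Fq ^ (v + 1) * Nc Fq C₀ s (v + 1)
      + (Fintype.card Fqm - Fintype.card Fq ^ v) * Nc Fq C₀ s v := by
  classical
  rw [Nc_succ_sum]
  have h : ∀ a : Fin (r + s) → Fqm,
      (if (fun i : Fin r => a (Fin.castAdd s i)) ∈ C₀ then
        (if rankWeight Fq a = v + 1 then Fintype.card Fq ^ rankWeight Fq a
         else if rankWeight Fq a + 1 = v + 1 then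
           Fintype.card Fqm - Fintype.card Fq ^ rankWeight Fq a
         else 0)
      else 0) =
      Fintype.card Fq ^ (v + 1) *
        (if (fun i : Fin r => a (Fin.castAdd s i)) ∈ C₀ ∧ rankWeight Fq a = v + 1 then 1 else 0)
      + (Fintype.card Fqm - Fintype.card Fq ^ v) *
        (if (fun i : Fin r => a (Fin.castAdd s i)) ∈ C₀ ∧ rankWeight Fq a = v then 1 else 0) := by
    intro a
    by_cases hP : (fun i : Fin r => a (Fin.castAdd s i)) ∈ C₀
    · by_cases h1 : rankWeight Fq a = v + 1
      · have h2 : rankWeight Fq a ≠ v := by omega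
        simp [hP, h1, h2]
      · by_cases h2 : rankWeight Fq a = v
        · have h3 : rankWeight Fq a + 1 = v + 1 := by omega
          simp [hP, h1, h2, h3]
        · have h3 : rankWeight Fq a + 1 ≠ v + 1 := by omega
          simp [hP, h1, h2, h3]
    · simp [hP]
  rw [Finset.sum_congr rfl (fun a _ => h a), Finset.sum_add_distrib, ← Finset.mul_sum,
    ← Finset.mul_sum, ← Finset.card_filter, ← Finset.card_filter,
    ← Fintype.card_subtype, ← Fintype.card_subtype, Nc, Nc,
    Nat.card_eq_fintype_card, Nat.card_eq_fintype_card]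


/-! ### Termwise and sum recursions -/

lemma term_rec {q : ℚ} (hq : 1 < q) (m s v i : ℕ) (hi : i ≤ v) (b : ℚ) :
    q ^ (i * (s + 1)) * b * gaussQ q (s + 1) (v + 1 - i) * alphaQ q ((m : ℤ) - i) (v + 1 - i)
    = q ^ (v + 1) * (q ^ (i * s) * b * gaussQ q s (v + 1 - i) * alphaQ q ((m : ℤ) - i) (v + 1 - i))
    + (q ^ m - q ^ v) * (q ^ (i * s) * b * gaussQ q s (v - i) * alphaQ q ((m : ℤ) - i) (v - i)) := by
  have hq0 : q ≠ 0 := by linarith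
  obtain ⟨k, rfl⟩ : ∃ k, v = i + k := ⟨v - i, by omega⟩
  have h1 : i + k + 1 - i = k + 1 := by omega
  have h2 : i + k - i = k := by omega
  rw [h1, h2, gaussQ_pascal hq s k, alphaQ_succ]
  have hmi : q ^ ((m : ℤ) - i) = q ^ m / q ^ i := by
    rw [zpow_sub₀ hq0, zpow_natCast, zpow_natCast]
  rw [hmi, zpow_natCast]
  have hqi : (q : ℚ) ^ i ≠ 0 := pow_ne_zero _ hq0
  field_simp
  ring

lemma sum_rec {q : ℚ} (hq : 1 < q) (b : ℕ → ℚ) (m s v : ℕ) :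
    ∑ i ∈ Finset.range (v + 2),
        q ^ (i * (s + 1)) * b i * gaussQ q (s + 1) (v + 1 - i) * alphaQ q ((m : ℤ) - i) (v + 1 - i)
    = q ^ (v + 1) * ∑ i ∈ Finset.range (v + 2),
        q ^ (i * s) * b i * gaussQ q s (v + 1 - i) * alphaQ q ((m : ℤ) - i) (v + 1 - i)
    + (q ^ m - q ^ v) * ∑ i ∈ Finset.range (v + 1),
        q ^ (i * s) * b i * gaussQ q s (v - i) * alphaQ q ((m : ℤ) - i) (v - i) := by
  rw [Finset.sum_range_succ, Finset.sum_range_succ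
    (fun i => q ^ (i * s) * b i * gaussQ q s (v + 1 - i) * alphaQ q ((m : ℤ) - i) (v + 1 - i))]
  simp only [Nat.sub_self, gaussQ_zero, alphaQ_zero]
  have hmain : ∑ i ∈ Finset.range (v + 1),
      q ^ (i * (s + 1)) * b i * gaussQ q (s + 1) (v + 1 - i) * alphaQ q ((m : ℤ) - i) (v + 1 - i)
      = q ^ (v + 1) * ∑ i ∈ Finset.range (v + 1),
          q ^ (i * s) * b i * gaussQ q s (v + 1 - i) * alphaQ q ((m : ℤ) - i) (v + 1 - i)
      + (q ^ m - q ^ v) * ∑ i ∈ Finset.range (v + 1),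
          q ^ (i * s) * b i * gaussQ q s (v - i) * alphaQ q ((m : ℤ) - i) (v - i) := by
    rw [Finset.mul_sum, Finset.mul_sum, ← Finset.sum_add_distrib]
    exact Finset.sum_congr rfl fun i hi =>
      term_rec hq m s v i (by have := Finset.mem_range.1 hi; omega) (b i)
  rw [mul_add, hmain]
  ring

end CPRD

theorem cartesian_product_rank_distribution
    (Fq Fqm : Type*) [Field Fq] [Field Fqm] [Fintype Fq] [Fintype Fqm] [Algebra Fq Fqm]
    (q m r : ℕ) (hq : Fintype.card Fq = q) (hm : Module.finrank Fq Fqm = m)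
    (C₀ : Submodule Fqm (Fin r → Fqm)) (s : ℕ)
    (B₀ : ℕ → ℕ)
    (hB₀ : ∀ i, B₀ i = Nat.card {c : Fin r → Fqm // c ∈ C₀ ∧ rankWeight Fq c = i})
    (u : ℕ) :
    (Nat.card {w : Fin (r + s) → Fqm //
        (fun i : Fin r => w (Fin.castAdd s i)) ∈ C₀ ∧ rankWeight Fq w = u} : ℚ) =
      ∑ i ∈ Finset.range (u + 1), (q : ℚ) ^ (i * s) * (B₀ i : ℚ) *
        gaussQ q s (u - i) * alphaQ (q : ℚ) ((m : ℤ) - i) (u - i) := by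
  classical
  have hq2 : 1 < q := hq ▸ Fintype.one_lt_card
  have hq1 : (1 : ℚ) < (q : ℚ) := by exact_mod_cast hq2
  have hQ : Fintype.card Fqm = q ^ m := by rw [← hq, ← hm]; exact card_eq_pow_finrank
  induction s generalizing u with
  | zero =>
    have hL : Nat.card {w : Fin (r + 0) → Fqm //
        (fun i : Fin r => w (Fin.castAdd 0 i)) ∈ C₀ ∧ rankWeight Fq w = u} = B₀ u := by
      rw [hB₀ u]
      rfl
    rw [hL, Finset.sum_range_succ]
    have h0 : ∑ i ∈ Finset.range u, (q : ℚ) ^ (i * 0) * (B₀ i : ℚ) *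
        gaussQ q 0 (u - i) * alphaQ (q : ℚ) ((m : ℤ) - i) (u - i) = 0 := by
      apply Finset.sum_eq_zero
      intro i hi
      have hi' : u - i ≠ 0 := Nat.sub_ne_zero_of_lt (Finset.mem_range.1 hi)
      have hz := CPRD.gaussQ_zero_left (q : ℚ) (u - i) hi'
      rw [hz]
      ring
    rw [h0, Nat.sub_self, CPRD.gaussQ_zero, CPRD.alphaQ_zero]
    simp
  | succ s IH =>
    rcases u with _ | v
    · show (CPRD.Nc Fq C₀ (s + 1) 0 : ℚ) = _
      rw [CPRD.Nc_succ_zero]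
      have h0 : (CPRD.Nc Fq C₀ s 0 : ℚ) = ∑ i ∈ Finset.range (0 + 1), (q : ℚ) ^ (i * s) *
          (B₀ i : ℚ) * gaussQ q s (0 - i) * alphaQ (q : ℚ) ((m : ℤ) - i) (0 - i) := IH 0
      rw [h0]
      simp [CPRD.gaussQ_zero, CPRD.alphaQ_zero]
    · have hcast : (Nat.card {w : Fin (r + (s + 1)) → Fqm //
          (fun i : Fin r => w (Fin.castAdd (s + 1) i)) ∈ C₀ ∧ rankWeight Fq w = v + 1} : ℚ)
          = (q : ℚ) ^ (v + 1) * (Nat.card {w : Fin (r + s) → Fqm //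
              (fun i : Fin r => w (Fin.castAdd s i)) ∈ C₀ ∧ rankWeight Fq w = v + 1} : ℚ)
          + ((q : ℚ) ^ m - (q : ℚ) ^ v) * (Nat.card {w : Fin (r + s) → Fqm //
              (fun i : Fin r => w (Fin.castAdd s i)) ∈ C₀ ∧ rankWeight Fq w = v} : ℚ) := by
        show (CPRD.Nc Fq C₀ (s + 1) (v + 1) : ℚ)
          = (q : ℚ) ^ (v + 1) * (CPRD.Nc Fq C₀ s (v + 1) : ℚ)
          + ((q : ℚ) ^ m - (q : ℚ) ^ v) * (CPRD.Nc Fq C₀ s v : ℚ)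
        rw [CPRD.Nc_succ_pos]
        rcases le_or_gt v m with hvm | hvm
        · have hle : Fintype.card Fq ^ v ≤ Fintype.card Fqm := by
            rw [hQ, hq]
            exact Nat.pow_le_pow_right (le_of_lt hq2) hvm
          rw [Nat.cast_add, Nat.cast_mul, Nat.cast_mul, Nat.cast_sub hle, hq, hQ]
          push_cast
          ring
        · have h1 : CPRD.Nc Fq C₀ s v = 0 := CPRD.Nc_eq_zero C₀ s v (hm ▸ hvm)
          rw [h1, Nat.mul_zero, Nat.add_zero, Nat.cast_mul, hq]
          push_cast
          ring
      rw [hcast, IH (v + 1), IH v]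
      exact (CPRD.sum_rec hq1 (fun i => (B₀ i : ℚ)) m s v).symm
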